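/- arXiv:2601.13780 — 3 statements merged into one kernel-verified Lean document; each statement's English description precedes it below -/
import Mathlib

section
/- Combination formula for detecting out-edges in DAGs: let G be a DAG with magnetic Laplacian L_q, let R = Re(−L_q) and I = Im(−L_q) restricted to off-diagonal entries, set c = cos(2πq), s = sin(2πq) with s ≠ 0, and define T_{ij} = R_{ij} + ((2−c)/s)·I_{ij} for i ≠ j. Then T_{ij} = 2 if (i,j) ∈ E, T_{ij} = 2(c−1) if (j,i) ∈ E, and T_{ij} = 0 otherwise. In particular, if c < 1, then for every node i with at least one outgoing edge, T_{ij} = max_k T_{ik} over k ≠ i if and only if A_{ij} = 1. -/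
open Matrix Complex

lemma exp_I_mul_re (x : ℝ) : (Complex.exp (Complex.I * x)).re = Real.cos x := by
  rw [mul_comm, Complex.exp_ofReal_mul_I_re]

lemma exp_I_mul_im (x : ℝ) : (Complex.exp (Complex.I * x)).im = Real.sin x := by
  rw [mul_comm, Complex.exp_ofReal_mul_I_im]

lemma mul_exp_I_re (a x : ℝ) :
    ((a : ℂ) * Complex.exp (Complex.I * (x : ℂ))).re = a * Real.cos x := by
  rw [Complex.mul_re, exp_I_mul_re, exp_I_mul_im, Complex.ofReal_re, Complex.ofReal_im]
  ring

lemma mul_exp_I_im (a x : ℝ) :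
    ((a : ℂ) * Complex.exp (Complex.I * (x : ℂ))).im = a * Real.sin x := by
  rw [Complex.mul_im, exp_I_mul_re, exp_I_mul_im, Complex.ofReal_re, Complex.ofReal_im]
  ring

/-- Combination formula for detecting out-edges in DAGs: with
`T i j = Re(-L_q) i j + ((2-c)/s) * Im(-L_q) i j`, we get `T i j = 2` on edges,
`2(c-1)` on reverse edges, `0` otherwise; and if `c < 1`, for any node `i` with an
outgoing edge, `T i j` attains the row maximum over `k ≠ i` iff `A i j = 1`. -/
theorem dag_T_matrix_identifies_out_edges {n : ℕ} (q : ℝ)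
    (hn : 2 ≤ n)
    (A : Matrix (Fin n) (Fin n) ℝ)
    (hA01 : ∀ i j, A i j = 0 ∨ A i j = 1)
    (hloop : ∀ i, A i i = 0)
    (h2cyc : ∀ i j, i ≠ j → A i j * A j i = 0)
    (As : Matrix (Fin n) (Fin n) ℝ)
    (hAs : ∀ i j, As i j = max (A i j) (A j i))
    (L : Matrix (Fin n) (Fin n) ℂ)
    (hL : ∀ i j, L i j =
      ((if i = j then ∑ k, As i k else 0 : ℝ) : ℂ) -
        (As i j : ℂ) * Complex.exp (Complex.I * (2 * Real.pi * q * (A i j - A j i))))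
    (c s : ℝ) (hc : c = Real.cos (2 * Real.pi * q)) (hs : s = Real.sin (2 * Real.pi * q))
    (hs0 : s ≠ 0)
    (T : Matrix (Fin n) (Fin n) ℝ)
    (hT : ∀ i j, i ≠ j → T i j = ((-L) i j).re + ((2 - c) / s) * ((-L) i j).im) :
    (∀ i j, i ≠ j →
      (A i j = 1 → T i j = 2) ∧
      (A j i = 1 → T i j = 2 * (c - 1)) ∧
      (A i j = 0 → A j i = 0 → T i j = 0)) ∧
    (c < 1 →
      ∀ i : Fin n, (∃ j, A i j = 1) →
        ∀ j : Fin n, j ≠ i →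
          ((∀ k : Fin n, k ≠ i → T i k ≤ T i j) ↔ A i j = 1)) := by
  have key : ∀ i j, i ≠ j →
      (A i j = 1 ∧ A j i = 0 ∧ T i j = 2) ∨
      (A j i = 1 ∧ A i j = 0 ∧ T i j = 2 * (c - 1)) ∨
      (A i j = 0 ∧ A j i = 0 ∧ T i j = 0) := by
    intro i j hij
    have hnegL : (-L) i j = (As i j : ℂ) *
        Complex.exp (Complex.I * ((2 * Real.pi * q * (A i j - A j i) : ℝ) : ℂ)) := by
      rw [Matrix.neg_apply, hL i j, if_neg hij]
      push_cast
      ring_nf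
    have hre : ((-L) i j).re = As i j * Real.cos (2 * Real.pi * q * (A i j - A j i)) := by
      rw [hnegL, mul_exp_I_re]
    have him : ((-L) i j).im = As i j * Real.sin (2 * Real.pi * q * (A i j - A j i)) := by
      rw [hnegL, mul_exp_I_im]
    have hTij := hT i j hij
    rw [hre, him] at hTij
    rcases hA01 i j with h1 | h1 <;> rcases hA01 j i with h2 | h2
    · right; right
      refine ⟨h1, h2, ?_⟩
      rw [hTij, hAs, h1, h2]
      simp
    · right; left
      refine ⟨h2, h1, ?_⟩
      rw [hTij, hAs, h1, h2]
      have : (2 : ℝ) * Real.pi * q * ((0:ℝ) - 1) = -(2 * Real.pi * q) := by ring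
      rw [this, Real.cos_neg, Real.sin_neg, ← hc, ← hs]
      field_simp
      rw [max_eq_right (zero_le_one : (0:ℝ) ≤ 1)]
      ring
    · left
      have h2' : A j i = 0 := by
        have := h2cyc i j hij
        rw [h1] at this; linarith
      refine ⟨h1, h2', ?_⟩
      rw [hTij, hAs, h1, h2']
      have : (2 : ℝ) * Real.pi * q * ((1:ℝ) - 0) = 2 * Real.pi * q := by ring
      rw [this, ← hc, ← hs]
      field_simp
      rw [max_eq_left (zero_le_one : (0:ℝ) ≤ 1)]
      ring
    · exfalso
      have := h2cyc i j hij
      rw [h1, h2] at this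
      norm_num at this
  constructor
  · intro i j hij
    refine ⟨fun h => ?_, fun h => ?_, fun h h' => ?_⟩ <;>
      rcases key i j hij with ⟨h1, h2, h3⟩ | ⟨h1, h2, h3⟩ | ⟨h1, h2, h3⟩ <;> linarith
  · intro hc1 i ⟨j0, hj0⟩ j hji
    have hj0i : j0 ≠ i := by
      intro h; rw [h, hloop] at hj0; norm_num at hj0
    have hij0 : i ≠ j0 := fun h => hj0i h.symm
    have hTij0 : T i j0 = 2 := by
      rcases key i j0 hij0 with ⟨_, _, h3⟩ | ⟨h1, h2, _⟩ | ⟨h1, _, _⟩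
      · exact h3
      · rw [hj0] at h2; norm_num at h2
      · rw [hj0] at h1; norm_num at h1
    have hij : i ≠ j := fun h => hji h.symm
    constructor
    · intro hmax
      have h2le : (2 : ℝ) ≤ T i j := hTij0 ▸ hmax j0 hj0i
      rcases key i j hij with ⟨h1, _, _⟩ | ⟨_, _, h3⟩ | ⟨_, _, h3⟩
      · exact h1
      · exfalso; rw [h3] at h2le; nlinarith
      · exfalso; rw [h3] at h2le; norm_num at h2le
    · intro hAij k hki
      have hTij : T i j = 2 := by
        rcases key i j hij with ⟨_, _, h3⟩ | ⟨_, h2, _⟩ | ⟨h1, _, _⟩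
        · exact h3
        · rw [hAij] at h2; norm_num at h2
        · rw [hAij] at h1; norm_num at h1
      have hik : i ≠ k := fun h => hki h.symm
      rw [hTij]
      rcases key i k hik with ⟨_, _, h3⟩ | ⟨_, _, h3⟩ | ⟨_, _, h3⟩ <;> rw [h3] <;> nlinarith
end

section
/- Bilinear recoverability under column permutations (Lemma for the mLPE): let G be a directed acyclic graph with magnetic Laplacian L_q = UΛU*, write UΛ^{1/2} = X + iY with X, Y ∈ ℝ^{n×n}, and let M_X, M_Y ∈ ℝ^{n×n} be permutation matrices. Set P = [X M_X , Y M_Y] ∈ ℝ^{n×2n}. Then there exist matrices W^{K_R}, W^{Q_R}, W^{K_I}, W^{Q_I} ∈ ℝ^{2n×2n} such that (P W^{K_R})(P W^{Q_R})ᵀ = Re(L_q) and (P W^{K_I})(P W^{Q_I})ᵀ = Im(L_q). -/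
open Matrix Complex

private lemma perm_mul_transpose {n : ℕ} (σ : Equiv.Perm (Fin n)) :
    σ.permMatrix ℝ * (σ.permMatrix ℝ)ᵀ = 1 := by
  rw [Equiv.Perm.permMatrix, ← PEquiv.toMatrix_symm, ← PEquiv.toMatrix_trans,
    ← Equiv.toPEquiv_symm, ← Equiv.toPEquiv_trans]
  simp

/-- Bilinear recoverability under column permutations: with `L_q = UΛU*` Hermitian PSD,
`UΛ^{1/2} = X + iY`, and permutation matrices `M_X, M_Y`, the block matrix
`P = [X M_X, Y M_Y]` admits weight matrices recovering `Re L_q` and `Im L_q`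
via bilinear products. -/
theorem mLPE_bilinear_recoverability {n : ℕ}
    (L U : Matrix (Fin n) (Fin n) ℂ)
    (hU : U * Uᴴ = 1)
    (lam : Fin n → ℝ) (hlam : ∀ i, 0 ≤ lam i)
    (hL : L = U * Matrix.diagonal (fun i => (lam i : ℂ)) * Uᴴ)
    (X Y : Matrix (Fin n) (Fin n) ℝ)
    (hX : X = (U * Matrix.diagonal (fun i => (Real.sqrt (lam i) : ℂ))).map Complex.re)
    (hY : Y = (U * Matrix.diagonal (fun i => (Real.sqrt (lam i) : ℂ))).map Complex.im)
    (MX MY : Matrix (Fin n) (Fin n) ℝ)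
    (hMX : ∃ σ : Equiv.Perm (Fin n), MX = σ.permMatrix ℝ)
    (hMY : ∃ σ : Equiv.Perm (Fin n), MY = σ.permMatrix ℝ)
    (P : Matrix (Fin n) (Fin n ⊕ Fin n) ℝ)
    (hP : P = Matrix.fromCols (X * MX) (Y * MY)) :
    ∃ WKR WQR WKI WQI : Matrix (Fin n ⊕ Fin n) (Fin n ⊕ Fin n) ℝ,
      (P * WKR) * (P * WQR)ᵀ = L.map Complex.re ∧
      (P * WKI) * (P * WQI)ᵀ = L.map Complex.im := by
  obtain ⟨σX, hσX⟩ := hMX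
  obtain ⟨σY, hσY⟩ := hMY
  have hMXo : MX * MXᵀ = 1 := by rw [hσX]; exact perm_mul_transpose σX
  have hMYo : MY * MYᵀ = 1 := by rw [hσY]; exact perm_mul_transpose σY
  set S := U * Matrix.diagonal (fun i => (Real.sqrt (lam i) : ℂ)) with hS
  have hSS : S * Sᴴ = L := by
    rw [hL, hS, conjTranspose_mul, Matrix.mul_assoc, ← Matrix.mul_assoc _ _ Uᴴ,
      ← Matrix.mul_assoc U]
    congr 1
    congr 1
    rw [Matrix.diagonal_conjTranspose, Matrix.diagonal_mul_diagonal,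
      Matrix.diagonal_eq_diagonal_iff]
    intro i
    simp only [Pi.star_apply, RCLike.star_def, Complex.conj_ofReal]
    rw [← Complex.ofReal_mul, Real.mul_self_sqrt (hlam i)]
  have hRe : L.map Complex.re = X * Xᵀ + Y * Yᵀ := by
    ext i j
    rw [← hSS]
    simp only [Matrix.map_apply, Matrix.mul_apply, Matrix.add_apply, Matrix.transpose_apply,
      Matrix.conjTranspose_apply, Complex.re_sum, ← Finset.sum_add_distrib]
    refine Finset.sum_congr rfl fun k _ => ?_
    simp [hX, hY, RCLike.star_def, Complex.mul_re]
  have hIm : L.map Complex.im = Y * Xᵀ - X * Yᵀ := by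
    ext i j
    rw [← hSS]
    simp only [Matrix.map_apply, Matrix.mul_apply, Matrix.sub_apply, Matrix.transpose_apply,
      Matrix.conjTranspose_apply, Complex.im_sum, ← Finset.sum_sub_distrib]
    refine Finset.sum_congr rfl fun k _ => ?_
    simp [hX, hY, RCLike.star_def, Complex.mul_im]
    ring
  refine ⟨1, 1, Matrix.fromBlocks 0 MXᵀ MYᵀ 0, Matrix.fromBlocks MXᵀ 0 0 (-MYᵀ), ?_, ?_⟩
  · rw [Matrix.mul_one, hP, Matrix.transpose_fromCols, Matrix.fromCols_mul_fromRows,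
      hRe]
    congr 1
    · rw [Matrix.transpose_mul, ← Matrix.mul_assoc, Matrix.mul_assoc X, hMXo,
        Matrix.mul_one]
    · rw [Matrix.transpose_mul, ← Matrix.mul_assoc, Matrix.mul_assoc Y, hMYo,
        Matrix.mul_one]
  · have h1 : P * Matrix.fromBlocks 0 MXᵀ MYᵀ 0 = Matrix.fromCols Y X := by
      rw [hP, Matrix.fromCols_mul_fromBlocks]
      simp [Matrix.mul_assoc, hMXo, hMYo]
    have h2 : P * Matrix.fromBlocks MXᵀ 0 0 (-MYᵀ) = Matrix.fromCols X (-Y) := by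
      rw [hP, Matrix.fromCols_mul_fromBlocks]
      simp [Matrix.mul_assoc, hMXo, hMYo]
    rw [h1, h2, Matrix.transpose_fromCols, Matrix.fromCols_mul_fromRows, hIm]
    simp [Matrix.mul_neg, sub_eq_add_neg]
end

section
/- Exact recovery of the directed adjacency from the T-matrix by thresholding: under the setting of the magnetic Laplacian of a DAG with s = sin(2πq) ≠ 0 and c = cos(2πq) < 1, defining T_{ij} = Re(−L_q)_{ij} + ((2−c)/s)·Im(−L_q)_{ij} for i ≠ j and T_{ii} arbitrary, the matrix Â with Â_{ij} = 1 if i ≠ j and T_{ij} > 1, else Â_{ij} = 0, equals the adjacency matrix A of the DAG. -/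
open Matrix Complex

/-- Exact recovery of the directed adjacency from the `T`-matrix by thresholding at
`1`: `Â i j = 1` iff `i ≠ j` and `T i j > 1`, and `Â = A`. -/
theorem dag_adjacency_recovery_by_thresholding {n : ℕ} (q : ℝ)
    (A : Matrix (Fin n) (Fin n) ℝ)
    (hA01 : ∀ i j, A i j = 0 ∨ A i j = 1)
    (hloop : ∀ i, A i i = 0)
    (h2cyc : ∀ i j, i ≠ j → A i j * A j i = 0)
    (As : Matrix (Fin n) (Fin n) ℝ)
    (hAs : ∀ i j, As i j = max (A i j) (A j i))
    (L : Matrix (Fin n) (Fin n) ℂ)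
    (hL : ∀ i j, L i j =
      ((if i = j then ∑ k, As i k else 0 : ℝ) : ℂ) -
        (As i j : ℂ) * Complex.exp (Complex.I * (2 * Real.pi * q * (A i j - A j i))))
    (hs0 : Real.sin (2 * Real.pi * q) ≠ 0)
    (hc1 : Real.cos (2 * Real.pi * q) < 1)
    (T : Matrix (Fin n) (Fin n) ℝ)
    (hT : ∀ i j, i ≠ j → T i j = ((-L) i j).re +
      ((2 - Real.cos (2 * Real.pi * q)) / Real.sin (2 * Real.pi * q)) * ((-L) i j).im) :
    ∀ i j, (if i ≠ j ∧ 1 < T i j then (1 : ℝ) else 0) = A i j := by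
  intro i j
  by_cases hij : i = j
  · subst hij
    simp [hloop]
  · have hT' := hT i j hij
    have hL' := hL i j
    rw [if_neg hij] at hL'
    set c := Real.cos (2 * Real.pi * q) with hc
    set s := Real.sin (2 * Real.pi * q) with hs
    rcases hA01 i j with h1 | h1 <;> rcases hA01 j i with h2 | h2
    · -- both 0
      have hAs0 : As i j = 0 := by rw [hAs, h1, h2]; simp
      have : T i j = 0 := by
        rw [hT']
        simp [Matrix.neg_apply, hL', hAs0]
      rw [if_neg (by rintro ⟨-, hgt⟩; rw [this] at hgt; linarith), h1]
    · -- A i j = 0, A j i = 1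
      have hAs1 : As i j = 1 := by rw [hAs, h1, h2]; simp
      have hexp : Complex.I * (2 * Real.pi * q * (A i j - A j i))
          = ((-(2 * Real.pi * q) : ℝ) : ℂ) * Complex.I := by
        rw [h1, h2]; push_cast; ring
      have hLv : (-L) i j = Complex.exp (((-(2 * Real.pi * q) : ℝ) : ℂ) * Complex.I) := by
        simp [Matrix.neg_apply, hL', hAs1, hexp]
      have hre : ((-L) i j).re = c := by
        rw [hLv, Complex.exp_ofReal_mul_I_re, Real.cos_neg, hc]
      have him : ((-L) i j).im = -s := by
        rw [hLv, Complex.exp_ofReal_mul_I_im, Real.sin_neg, hs]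
      have : T i j = 2 * c - 2 := by
        rw [hT', hre, him]
        field_simp
        ring
      rw [if_neg (by rintro ⟨-, hgt⟩; rw [this] at hgt; linarith), h1]
    · -- A i j = 1, A j i = 0
      have hAs1 : As i j = 1 := by rw [hAs, h1, h2]; simp
      have hexp : Complex.I * (2 * Real.pi * q * (A i j - A j i))
          = ((2 * Real.pi * q : ℝ) : ℂ) * Complex.I := by
        rw [h1, h2]; push_cast; ring
      have hLv : (-L) i j = Complex.exp (((2 * Real.pi * q : ℝ) : ℂ) * Complex.I) := by
        simp [Matrix.neg_apply, hL', hAs1, hexp]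
      have hre : ((-L) i j).re = c := by
        rw [hLv, Complex.exp_ofReal_mul_I_re, hc]
      have him : ((-L) i j).im = s := by
        rw [hLv, Complex.exp_ofReal_mul_I_im, hs]
      have : T i j = 2 := by
        rw [hT', hre, him]
        field_simp
        ring
      rw [if_pos ⟨hij, by rw [this]; norm_num⟩, h1]
    · exact absurd (h2cyc i j hij) (by rw [h1, h2]; norm_num)
end
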